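/- Let d ≥ 1 be an integer, R > 0 and β ≥ 0 reals, and let K' ⊆ ℝ × ℝ^d be a measurable set with 0 < Vol(K') < ∞ whose first coordinate lies in [0, 2R]. Define Z = ∫_{K'} exp(−β·x₀) d(x₀, x). Then the fidelity between the uniform density 1/Vol(K') and the Gibbs density exp(−β·x₀)/Z on K' satisfies ∫_{K'} √(exp(−β·x₀) / (Vol(K')·Z)) d(x₀, x) ≥ 1 − 2βR. -/

import Mathlib

open MeasureTheory Set

theorem gibbs_uniform_fidelity_bound
    (d : ℕ) (hd : 1 ≤ d) (R β : ℝ) (hR : 0 < R) (hβ : 0 ≤ β)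
    (K' : Set (ℝ × EuclideanSpace ℝ (Fin d))) (hK' : MeasurableSet K')
    (hpos : 0 < volume K') (hfin : volume K' < ⊤)
    (hsub : K' ⊆ Icc 0 (2 * R) ×ˢ (univ : Set (EuclideanSpace ℝ (Fin d))))
    (Z : ℝ) (hZ : Z = ∫ p in K', Real.exp (-β * p.1) ∂volume) :
    1 - 2 * β * R ≤
      ∫ p in K', Real.sqrt (Real.exp (-β * p.1) / ((volume K').toReal * Z)) ∂volume := by
  set V := (volume K').toReal with hVdef
  have hVpos : 0 < V := ENNReal.toReal_pos hpos.ne' hfin.ne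
  have hcoord : ∀ p ∈ K', 0 ≤ p.1 ∧ p.1 ≤ 2 * R := fun p hp =>
    ⟨(hsub hp).1.1, (hsub hp).1.2⟩
  have hexp_cont : Continuous fun p : ℝ × EuclideanSpace ℝ (Fin d) => Real.exp (-β * p.1) :=
    Real.continuous_exp.comp (continuous_const.mul continuous_fst)
  have hconst : IntegrableOn (fun _ : ℝ × EuclideanSpace ℝ (Fin d) => (1 : ℝ)) K' volume :=
    integrableOn_const hfin.ne
  have hint : IntegrableOn (fun p : ℝ × EuclideanSpace ℝ (Fin d) => Real.exp (-β * p.1))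
      K' volume := by
    apply Integrable.mono' hconst hexp_cont.measurable.aestronglyMeasurable.restrict
    filter_upwards [ae_restrict_mem hK'] with p hp
    rw [Real.norm_eq_abs, abs_of_pos (Real.exp_pos _)]
    exact Real.exp_le_one_iff.2 (by nlinarith [(hcoord p hp).1])
  have hZle : Z ≤ V := by
    rw [hZ]
    calc ∫ p in K', Real.exp (-β * p.1) ≤ ∫ _p in K', (1 : ℝ) := by
          refine setIntegral_mono_on hint hconst hK' fun p hp => ?_
          exact Real.exp_le_one_iff.2 (by nlinarith [(hcoord p hp).1])
      _ = V := by simp [hVdef, Measure.real]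
  have hZge : Real.exp (-(2 * β * R)) * V ≤ Z := by
    rw [hZ]
    calc Real.exp (-(2 * β * R)) * V = ∫ _p in K', Real.exp (-(2 * β * R)) := by
          rw [setIntegral_const, smul_eq_mul, mul_comm]; rfl
      _ ≤ ∫ p in K', Real.exp (-β * p.1) := by
          refine setIntegral_mono_on (integrableOn_const hfin.ne) hint hK' fun p hp => ?_
          exact Real.exp_le_exp.2 (by nlinarith [(hcoord p hp).2])
  have hZpos : 0 < Z := lt_of_lt_of_le (by positivity) hZge
  have hsq : (Real.exp (-(β * R))) ^ 2 = Real.exp (-(2 * β * R)) := by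
    rw [sq, ← Real.exp_add]; ring_nf
  have hpt : ∀ p ∈ K', Real.exp (-(β * R)) / V ≤ Real.sqrt (Real.exp (-β * p.1) / (V * Z)) := by
    intro p hp
    have h1 : Real.exp (-(2 * β * R)) / (V * V) ≤ Real.exp (-β * p.1) / (V * Z) := by
      apply div_le_div₀ (Real.exp_pos _).le
      · exact Real.exp_le_exp.2 (by nlinarith [(hcoord p hp).2])
      · positivity
      · nlinarith
    have h2 := Real.sqrt_le_sqrt h1
    have h3 : Real.sqrt (Real.exp (-(2 * β * R)) / (V * V)) = Real.exp (-(β * R)) / V := by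
      have : Real.exp (-(2 * β * R)) / (V * V) = (Real.exp (-(β * R)) / V) ^ 2 := by
        rw [div_pow, hsq]; ring_nf
      rw [this, Real.sqrt_sq (by positivity)]
    rwa [h3] at h2
  have hint2 : IntegrableOn
      (fun p : ℝ × EuclideanSpace ℝ (Fin d) => Real.sqrt (Real.exp (-β * p.1) / (V * Z)))
      K' volume := by
    have hc : Continuous fun p : ℝ × EuclideanSpace ℝ (Fin d) =>
        Real.sqrt (Real.exp (-β * p.1) / (V * Z)) :=
      Real.continuous_sqrt.comp (hexp_cont.div_const _)
    apply Integrable.mono' ((integrableOn_const (C := Real.sqrt (1 / (V * Z))) hfin.ne))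
      hc.measurable.aestronglyMeasurable.restrict
    filter_upwards [ae_restrict_mem hK'] with p hp
    rw [Real.norm_eq_abs, abs_of_nonneg (Real.sqrt_nonneg _)]
    apply Real.sqrt_le_sqrt
    have h1 : Real.exp (-β * p.1) ≤ 1 :=
      Real.exp_le_one_iff.2 (by nlinarith [(hcoord p hp).1])
    exact div_le_div_of_nonneg_right h1 (by positivity) |>.trans_eq rfl
  have hmain : Real.exp (-(β * R)) / V * V ≤
      ∫ p in K', Real.sqrt (Real.exp (-β * p.1) / (V * Z)) ∂volume :=
    (setIntegral_ge_of_const_le_real hK' hfin.ne hpt hint2).trans_eq' rfl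
  rw [div_mul_cancel₀ _ hVpos.ne'] at hmain
  have hexpge : 1 - β * R ≤ Real.exp (-(β * R)) := by
    nlinarith [Real.add_one_le_exp (-(β * R))]
  nlinarith [hmain, hβ, hR.le]
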